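/- Let t be a positive integer and r ≥ t+1 a row index. For every F ∈ SSF(α), the number of free entries t in row r of Φ_{r,t}(F) equals the number of free entries t+1 in row r of F, and the number of free entries t+1 in row r of Φ_{r,t}(F) equals the number of free entries t in row r of F. -/

import Mathlib

open Classical MvPolynomial

noncomputable section

namespace Skyline

/-- The box in row `i` and column `j` of the skyline diagram of the composition
`α = (α 1, …, α n)` (rows indexed top to bottom, row `i` has `α i` boxes). -/
def Box (n : ℕ) (α : ℕ → ℕ) (i j : ℕ) : Prop :=
  1 ≤ i ∧ i ≤ n ∧ 1 ≤ j ∧ j ≤ α i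

/-- `F` is a semistandard skyline filling for `α` (with the convention that
`F` takes the value `0` outside of the skyline diagram):
(i) entries weakly decrease from left to right along each row;
(ii) each entry satisfies `F i j ≤ i`;
(iii) the entries in each column are distinct;
(iv) whenever an entry `F i j` lies strictly below an entry `F i' j` in the same
column with `F i j < F i' j`, the box `(i', j+1)` belongs to the diagram and
`F i j < F i' (j+1)`. -/
def IsSSF (n : ℕ) (α : ℕ → ℕ) (F : ℕ → ℕ → ℕ) : Prop :=
  (∀ i j, ¬ Box n α i j → F i j = 0) ∧
  (∀ i j, Box n α i j → 1 ≤ F i j) ∧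
  (∀ i j, 1 ≤ j → Box n α i (j+1) → F i (j+1) ≤ F i j) ∧
  (∀ i j, Box n α i j → F i j ≤ i) ∧
  (∀ i i' j, Box n α i j → Box n α i' j → i ≠ i' → F i j ≠ F i' j) ∧
  (∀ i i' j, Box n α i j → Box n α i' j → i' < i → F i j < F i' j →
      Box n α i' (j+1) ∧ F i j < F i' (j+1))

/-- Column `j` of the filling `F` contains the entry `t`. -/
def ColContains (n : ℕ) (α : ℕ → ℕ) (F : ℕ → ℕ → ℕ) (j t : ℕ) : Prop :=
  ∃ i, Box n α i j ∧ F i j = t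

/-- The unpaired entry `t` in box `(i,j)` and the unpaired entry `t+1` in box
`(i',j')` form a pseudo-free pair: the `t+1` lies strictly above and strictly to
the right of the `t`, and every column strictly between them contains both `t`
and `t+1`. -/
def PseudoFreePair (n : ℕ) (α : ℕ → ℕ) (F : ℕ → ℕ → ℕ) (t i j i' j' : ℕ) : Prop :=
  Box n α i j ∧ F i j = t ∧ ¬ ColContains n α F j (t+1) ∧
  Box n α i' j' ∧ F i' j' = t+1 ∧ ¬ ColContains n α F j' t ∧
  i' < i ∧ j < j' ∧
  ∀ k, j < k → k < j' → ColContains n α F k t ∧ ColContains n α F k (t+1)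

/-- The entry `t` in box `(i,j)` of `F` is free: it is neither paired nor
pseudo-free. -/
def FreeT (n : ℕ) (α : ℕ → ℕ) (F : ℕ → ℕ → ℕ) (t i j : ℕ) : Prop :=
  Box n α i j ∧ F i j = t ∧ ¬ ColContains n α F j (t+1) ∧
  ¬ ∃ i' j', PseudoFreePair n α F t i j i' j'

/-- The entry `t+1` in box `(i,j)` of `F` is free: it is neither paired nor
pseudo-free. -/
def FreeTp1 (n : ℕ) (α : ℕ → ℕ) (F : ℕ → ℕ → ℕ) (t i j : ℕ) : Prop :=
  Box n α i j ∧ F i j = t+1 ∧ ¬ ColContains n α F j t ∧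
  ¬ ∃ i₀ j₀, PseudoFreePair n α F t i₀ j₀ i j

/-- The lowering operator `L_{r,t}`: if row `r` has a free entry `t+1`, replace
the rightmost free `t+1` in row `r` (in column `j`) by `t`, and exchange the
entries `t` and `t+1` in each column `k` of the maximal interval `j' ≤ k < j`
such that `F r k = t+1` and column `k` contains an entry `t` strictly below row
`r`; otherwise do nothing. -/
def Lop (n : ℕ) (α : ℕ → ℕ) (r t : ℕ) (F : ℕ → ℕ → ℕ) : ℕ → ℕ → ℕ :=
  if {j | FreeTp1 n α F t r j}.Nonempty then
    let j := sSup {j | FreeTp1 n α F t r j}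
    let S : Set ℕ := {k | k < j ∧ ∀ m, k ≤ m → m < j →
      F r m = t + 1 ∧ ∃ i, r < i ∧ Box n α i m ∧ F i m = t}
    fun i c =>
      if i = r ∧ c = j then t
      else if c ∈ S ∧ F i c = t then t + 1
      else if c ∈ S ∧ F i c = t + 1 then t
      else F i c
  else F

/-- The raising operator `R_{r,t}`: if row `r` has a free entry `t`, replace
the leftmost free `t` in row `r` (in column `j`) by `t+1`, and exchange the
entries `t` and `t+1` in each column `k` of the maximal interval `j' ≤ k < j`
such that `F r k = t` and column `k` contains an entry `t+1` strictly below row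
`r`; otherwise do nothing. -/
def Rop (n : ℕ) (α : ℕ → ℕ) (r t : ℕ) (F : ℕ → ℕ → ℕ) : ℕ → ℕ → ℕ :=
  if {j | FreeT n α F t r j}.Nonempty then
    let j := sInf {j | FreeT n α F t r j}
    let S : Set ℕ := {k | k < j ∧ ∀ m, k ≤ m → m < j →
      F r m = t ∧ ∃ i, r < i ∧ Box n α i m ∧ F i m = t + 1}
    fun i c =>
      if i = r ∧ c = j then t + 1
      else if c ∈ S ∧ F i c = t then t + 1
      else if c ∈ S ∧ F i c = t + 1 then t
      else F i c
  else F

/-- The involution `Φ_{r,t}`: with `n₁` the number of free entries `t+1` and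
`n₂` the number of free entries `t` in row `r`, apply `L_{r,t}` iterated
`n₁ - n₂` times if `n₁ > n₂`, apply `R_{r,t}` iterated `n₂ - n₁` times if
`n₁ < n₂`, and do nothing if `n₁ = n₂`. -/
def Phi (n : ℕ) (α : ℕ → ℕ) (r t : ℕ) (F : ℕ → ℕ → ℕ) : ℕ → ℕ → ℕ :=
  let n₁ := {j | FreeTp1 n α F t r j}.ncard
  let n₂ := {j | FreeT n α F t r j}.ncard
  if n₂ < n₁ then (Lop n α r t)^[n₁ - n₂] F
  else if n₁ < n₂ then (Rop n α r t)^[n₂ - n₁] F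
  else F

/-- The involution `Φ_r`: apply `Φ_{i,r}` for every row index `i` with
`r + 1 ≤ i ≤ n`. -/
def PhiAll (n : ℕ) (α : ℕ → ℕ) (r : ℕ) (F : ℕ → ℕ → ℕ) : ℕ → ℕ → ℕ :=
  (List.range' (r+1) (n - r)).foldl (fun G i => Phi n α i r G) F

/-- The monomial `x^F = ∏_{(i,j) ∈ D(α)} x_{F(i,j)}` of a filling `F`. -/
def weight (n : ℕ) (α : ℕ → ℕ) (F : ℕ → ℕ → ℕ) : MvPolynomial ℕ ℤ :=
  ∏ i ∈ Finset.Icc 1 n, ∏ j ∈ Finset.Icc 1 (α i), X (F i j)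

/-- The Demazure operator `π_r(f) = ∂_r(x_r f)`, characterized by
`(x_r - x_{r+1}) · π_r(f) = x_r f - x_{r+1} · (s_r f)`. -/
def demazure (r : ℕ) (f : MvPolynomial ℕ ℤ) : MvPolynomial ℕ ℤ :=
  if h : ∃ g, (X r - X (r+1)) * g
      = X r * f - X (r+1) * (rename (Equiv.swap r (r+1)) f)
  then h.choose else 0

/-- The composition obtained from `α` by interchanging `α r` and `α (r+1)`. -/
def swapComp (α : ℕ → ℕ) (r : ℕ) : ℕ → ℕ :=
  fun i => if i = r then α (r+1) else if i = r+1 then α r else α i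

/-- Auxiliary fuelled recursion for the key polynomial: if `α` is not a
partition, apply the Demazure operator `π_i` at the first ascent `i` of `α`
to the key polynomial of the composition with `α i` and `α (i+1)`
interchanged; if `α` is a partition, return `x₁^{α₁} ⋯ xₙ^{αₙ}`. -/
def keyAux (n : ℕ) : ℕ → (ℕ → ℕ) → MvPolynomial ℕ ℤ
  | 0, α => ∏ i ∈ Finset.Icc 1 n, (X i : MvPolynomial ℕ ℤ) ^ (α i)
  | (fuel+1), α =>
    if ∃ i, 1 ≤ i ∧ i < n ∧ α i < α (i+1) then
      demazure (sInf {i | 1 ≤ i ∧ i < n ∧ α i < α (i+1)})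
        (keyAux n fuel (swapComp α (sInf {i | 1 ≤ i ∧ i < n ∧ α i < α (i+1)})))
    else ∏ i ∈ Finset.Icc 1 n, (X i : MvPolynomial ℕ ℤ) ^ (α i)

/-- The key polynomial `κ_α` of the composition `α = (α 1, …, α n)`.
(`n * n` exceeds the number of inversions of `α`, so the fuel never runs out.) -/
def key (n : ℕ) (α : ℕ → ℕ) : MvPolynomial ℕ ℤ :=
  keyAux n (n * n) α

/-- `r` is the first ascent of `α`: `α 1 ≥ α 2 ≥ ⋯ ≥ α r` and `α r < α (r+1)`. -/
def FirstAscent (n : ℕ) (α : ℕ → ℕ) (r : ℕ) : Prop :=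
  1 ≤ r ∧ r + 1 ≤ n ∧ (∀ i, 1 ≤ i → i < r → α (i+1) ≤ α i) ∧ α r < α (r+1)

/-- Move the last `α (r+1) - α r` boxes of row `r` of `F'`, together with their
entries, down to row `r+1` (here `F' ∈ SSF(α')` with `α'` obtained from `α` by
interchanging `α r` and `α (r+1)`). -/
def moveDown (α : ℕ → ℕ) (r : ℕ) (F : ℕ → ℕ → ℕ) : ℕ → ℕ → ℕ :=
  fun i j =>
    if i = r ∧ α r < j then 0
    else if i = r + 1 ∧ α r < j then F r j
    else F i j

/-- The set `DF(F') = {F₀, F₁, …, F_m}` of derived fillings of `F' ∈ SSF(α')`,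
where `m` is the number of free entries `r` in row `r` of `F'`, `F₀` is obtained
from `F'` by moving the last `α (r+1) - α r` boxes of row `r` down to row `r+1`,
and `F_k = R_{r+1,r}^k(F₀)`. -/
def DF (n : ℕ) (α : ℕ → ℕ) (r : ℕ) (F' : ℕ → ℕ → ℕ) : Set (ℕ → ℕ → ℕ) :=
  {F | ∃ k, k ≤ {j | FreeT n (swapComp α r) F' r r j}.ncard ∧
    F = (Rop n α (r+1) r)^[k] (moveDown α r F')}


/-! ### Auxiliary machinery for stmt9 -/

variable {n : ℕ} {α : ℕ → ℕ} {t r : ℕ} {F : ℕ → ℕ → ℕ}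

theorem box_mono {i c c' : ℕ} (h : Box n α i c) (h1 : 1 ≤ c') (h2 : c' ≤ c) :
    Box n α i c' := ⟨h.1, h.2.1, h1, h2.trans h.2.2.2⟩

theorem row_anti (hF : IsSSF n α F) {i c c' : ℕ} (hb : Box n α i c') (h1 : 1 ≤ c)
    (h2 : c ≤ c') : F i c' ≤ F i c := by
  induction c' with
  | zero => omega
  | succ m ih =>
    rcases Nat.lt_or_ge c (m+1) with h | h
    · have hbm : Box n α i m := box_mono hb (by omega) (by omega)
      exact le_trans (hF.2.2.1 i m (by omega) hb) (ih hbm (by omega))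
    · have : c = m + 1 := by omega
      simp [this]

theorem val_unique (hF : IsSSF n α F) {i i' c : ℕ} (h : Box n α i c) (h' : Box n α i' c)
    (he : F i c = F i' c) : i = i' := by
  by_contra hne
  exact hF.2.2.2.2.1 i i' c h h' hne he

theorem lemX (hF : IsSSF n α F) {p q k v : ℕ} (hp : Box n α p k) (hq : Box n α q (k+1))
    (hvp : F p k = v) (hvq : F q (k+1) = v) (hlt : q < p) : False := by
  have hqk : Box n α q k := box_mono hq hp.2.2.1 (by omega)
  have h1 : v ≤ F q k := hvq ▸ hF.2.2.1 q k hp.2.2.1 hq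
  have h2 : F q k ≠ v := fun he => absurd (val_unique hF hqk hp (he.trans hvp.symm)) (by omega)
  have h3 : F p k < F q k := by omega
  have := hF.2.2.2.2.2 p q k hp hqk hlt h3
  omega

theorem chainGE (hF : IsSSF n α F) {a b v r₀ : ℕ}
    (hbase : ∀ q, Box n α q a → F q a = v → r₀ ≤ q)
    (hmid : ∀ k, a ≤ k → k ≤ b → ∃ p, Box n α p k ∧ F p k = v)
    (hab : a ≤ b) : ∀ q, Box n α q b → F q b = v → r₀ ≤ q := by
  induction b, hab using Nat.le_induction with
  | base => exact hbase
  | succ m hm ih =>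
    intro q hq hv
    obtain ⟨p, hp, hpv⟩ := hmid m hm (by omega)
    have hpr : r₀ ≤ p := ih (fun k hk hk' => hmid k hk (by omega)) p hp hpv
    have : ¬ q < p := fun hlt => lemX hF hp hq hpv hv hlt
    omega

theorem freeTp1_finite : {c | FreeTp1 n α F t r c}.Finite :=
  (Set.finite_Icc 1 (α r)).subset (fun c hc => ⟨hc.1.2.2.1, hc.1.2.2.2⟩)

theorem freeT_finite : {c | FreeT n α F t r c}.Finite :=
  (Set.finite_Icc 1 (α r)).subset (fun c hc => ⟨hc.1.2.2.1, hc.1.2.2.2⟩)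

/-! ### The L side -/

noncomputable def LJ (n : ℕ) (α : ℕ → ℕ) (t r : ℕ) (F : ℕ → ℕ → ℕ) : ℕ :=
  sSup {j | FreeTp1 n α F t r j}

def LS (n : ℕ) (α : ℕ → ℕ) (t r : ℕ) (F : ℕ → ℕ → ℕ) : Set ℕ :=
  {k | k < LJ n α t r F ∧ ∀ m, k ≤ m → m < LJ n α t r F →
      F r m = t + 1 ∧ ∃ i, r < i ∧ Box n α i m ∧ F i m = t}

theorem lop_apply (hNE : {j | FreeTp1 n α F t r j}.Nonempty) (i c : ℕ) :
    Lop n α r t F i c =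
      if i = r ∧ c = LJ n α t r F then t
      else if c ∈ LS n α t r F ∧ F i c = t then t + 1
      else if c ∈ LS n α t r F ∧ F i c = t + 1 then t
      else F i c := by
  unfold Lop
  rw [if_pos hNE]
  exact if_congr Iff.rfl rfl (if_congr Iff.rfl rfl (if_congr Iff.rfl rfl rfl))

theorem lj_mem (hNE : {j | FreeTp1 n α F t r j}.Nonempty) :
    FreeTp1 n α F t r (LJ n α t r F) :=
  Nat.sSup_mem hNE (freeTp1_finite.bddAbove)

theorem lj_max {c : ℕ} (hc : FreeTp1 n α F t r c) : c ≤ LJ n α t r F :=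
  le_csSup (freeTp1_finite.bddAbove) hc

theorem lS_cond {c : ℕ} (hc : c ∈ LS n α t r F) :
    F r c = t + 1 ∧ ∃ i, r < i ∧ Box n α i c ∧ F i c = t :=
  hc.2 c le_rfl hc.1

theorem lS_closure {c c' : ℕ} (hc : c ∈ LS n α t r F) (h1 : c ≤ c')
    (h2 : c' < LJ n α t r F) : c' ∈ LS n α t r F :=
  ⟨h2, fun m hm hm' => hc.2 m (h1.trans hm) hm'⟩

theorem lS_succ {c : ℕ} (hc : c ∈ LS n α t r F) :
    c + 1 ∈ LS n α t r F ∨ c + 1 = LJ n α t r F := by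
  rcases Nat.lt_or_ge (c+1) (LJ n α t r F) with h | h
  · exact Or.inl (lS_closure hc (by omega) h)
  · right; have := hc.1; omega

theorem lS_fail {c : ℕ} (hc : c ∉ LS n α t r F)
    (h : c + 1 ∈ LS n α t r F ∨ c + 1 = LJ n α t r F) :
    ¬ (F r c = t + 1 ∧ ∃ i, r < i ∧ Box n α i c ∧ F i c = t) := by
  intro hcond
  apply hc
  have hlt : c < LJ n α t r F := by
    rcases h with h | h
    · have := h.1; omega
    · have : FreeTp1 n α F t r (LJ n α t r F) → True := fun _ => trivial
      omega
  refine ⟨hlt, fun m hm hm' => ?_⟩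
  rcases Nat.eq_or_lt_of_le hm with he | hlt'
  · exact he ▸ hcond
  · rcases h with h | h
    · exact h.2 m (by omega) hm'
    · omega


theorem lmarch (hF : IsSSF n α F) (hNE : {j | FreeTp1 n α F t r j}.Nonempty) :
    ∀ c, LJ n α t r F < c → Box n α r c → F r c ≠ t + 1 := by
  obtain ⟨hjb, hjv, hjcc, hjps⟩ := lj_mem hNE
  have hJ1 : 1 ≤ LJ n α t r F := hjb.2.2.1
  suffices main : ∀ d c, α r + 1 - c ≤ d → LJ n α t r F < c → Box n α r c →
      F r c = t + 1 → False by
    intro c h1 h2 h3; exact main (α r + 1 - c) c le_rfl h1 h2 h3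
  intro d
  induction d with
  | zero => intro c hd hlt hb _; have := hb.2.2.2; omega
  | succ d ih =>
    intro c hd hlt hb hv
    have hsq : ∀ c', LJ n α t r F ≤ c' → c' ≤ c → F r c' = t + 1 := by
      intro c' h1 h2
      have hb' : Box n α r c' := box_mono hb (by omega) h2
      have l1 : F r c' ≤ F r (LJ n α t r F) := row_anti hF hb' hJ1 h1
      have l2 : F r c ≤ F r c' := row_anti hF hb (by omega) h2
      omega
    by_cases hex : ∃ i₂, Box n α i₂ c ∧ F i₂ c = t
    · obtain ⟨i₂, hbi, hvi⟩ := hex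
      rcases lt_trichotomy i₂ r with hir | hir | hir
      · -- t strictly above row r in column c : leftward induction from column LJ
        have Q : ∀ c', LJ n α t r F ≤ c' → c' ≤ c → Box n α i₂ c' → F i₂ c' ≠ t := by
          intro c' h1
          induction c', h1 using Nat.le_induction with
          | base => intro _ hbJ hvJ; exact hjcc ⟨i₂, hbJ, hvJ⟩
          | succ m hm ihm =>
            intro hmc hbm hvm
            have hbm' : Box n α i₂ m := box_mono hbm (by omega) (by omega)
            have h1m : 1 ≤ F i₂ m := hF.2.1 i₂ m hbm'
            have hmono : F i₂ (m+1) ≤ F i₂ m := hF.2.2.1 i₂ m (by omega) hbm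
            have hne_t : F i₂ m ≠ t := ihm (by omega) hbm'
            have hrm : F r m = t + 1 := hsq m hm (by omega)
            have hbrm : Box n α r m := box_mono hb (by omega) (by omega)
            have hne_t1 : F i₂ m ≠ t + 1 := fun he =>
              absurd (val_unique hF hbm' hbrm (by rw [he, hrm])) (by omega)
            have h5 := hF.2.2.2.2.2 r i₂ m hbrm hbm' hir (by omega)
            omega
        exact Q c (le_of_lt hlt) le_rfl hbi hvi
      · subst hir; omega
      · have h5 := hF.2.2.2.2.2 i₂ r c hbi hb hir (by omega)
        have hmono : F r (c+1) ≤ F r c := hF.2.2.1 r c hb.2.2.1 h5.1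
        have hrc1 : F r (c+1) = t + 1 := by omega
        have hcb : c ≤ α r := hb.2.2.2
        exact ih (c+1) (by omega) (by omega) h5.1 hrc1
    · have hfree : FreeTp1 n α F t r c := by
        refine ⟨hb, hv, fun ⟨i₀, hb₀, hv₀⟩ => hex ⟨i₀, hb₀, hv₀⟩, ?_⟩
        rintro ⟨i₀, j₀, hb1, hv1, hcc1, _, _, hcc2, hlt1, hlt2, hmid⟩
        rcases lt_trichotomy j₀ (LJ n α t r F) with h | h | h
        · exact hjcc (hmid (LJ n α t r F) h hlt).1
        · exact hjcc ⟨i₀, h ▸ hb1, h ▸ hv1⟩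
        · exact hcc1 ⟨r, box_mono hb hb1.2.2.1 (le_of_lt hlt2),
            hsq j₀ (by omega) (by omega)⟩
      exact absurd (lj_max hfree) (by omega)

theorem lNoLowT (hF : IsSSF n α F) (hNE : {j | FreeTp1 n α F t r j}.Nonempty)
    {c i : ℕ} (hc : c ∉ LS n α t r F)
    (hnext : c + 1 ∈ LS n α t r F ∨ c + 1 = LJ n α t r F)
    (hi : r < i) (hbi : Box n α i c) : F i c ≠ t := by
  intro hv
  obtain ⟨hjb, hjv, hjcc, hjps⟩ := lj_mem hNE
  have hcJ : c + 1 ≤ LJ n α t r F := by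
    rcases hnext with h | h
    · have := h.1; omega
    · omega
  have hbc1 : Box n α r (c+1) := box_mono hjb (by omega) hcJ
  have hvc1 : F r (c+1) = t + 1 := by
    rcases hnext with h | h
    · exact (lS_cond h).1
    · exact h ▸ hjv
  have hfail := lS_fail hc hnext
  have hFrc_ne : F r c ≠ t + 1 := fun h => hfail ⟨h, i, hi, hbi, hv⟩
  have hbr : Box n α r c := box_mono hbc1 hbi.2.2.1 (by omega)
  have hmono : F r (c+1) ≤ F r c := hF.2.2.1 r c hbi.2.2.1 hbc1
  have hge : t + 2 ≤ F r c := by omega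
  by_cases hq : ∃ q, Box n α q c ∧ F q c = t + 1
  · obtain ⟨q, hbq, hvq⟩ := hq
    have hqr : q ≠ r := fun h => by rw [h] at hvq; omega
    rcases lt_or_gt_of_ne hqr with hql | hqg
    · have h5 := hF.2.2.2.2.2 i q c hbi hbq (by omega) (by omega)
      have hm2 : F q (c+1) ≤ F q c := hF.2.2.1 q c hbi.2.2.1 h5.1
      have hq1 : F q (c+1) = t + 1 := by omega
      exact absurd (val_unique hF h5.1 hbc1 (by rw [hq1, hvc1])) (by omega)
    · exact lemX hF hbq hbc1 hvq hvc1 hqg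
  · apply hjps
    refine ⟨i, c, hbi, hv, fun hcc => hq hcc, hjb, hjv, hjcc, hi, by omega, ?_⟩
    intro k hk1 hk2
    have hkS : k ∈ LS n α t r F := by
      rcases hnext with h | h
      · exact lS_closure h (by omega) hk2
      · omega
    obtain ⟨hv_r, i', hi', hbi', hvi'⟩ := lS_cond hkS
    exact ⟨⟨i', hbi', hvi'⟩, ⟨r, box_mono hjb (by omega) (le_of_lt hk2), hv_r⟩⟩


theorem box_of_val (hF : IsSSF n α F) {i c v : ℕ} (hv : F i c = v) (h1 : 1 ≤ v) :
    Box n α i c := by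
  by_contra hb; rw [hF.1 i c hb] at hv; omega

theorem la_rj (hNE : {j | FreeTp1 n α F t r j}.Nonempty) :
    Lop n α r t F r (LJ n α t r F) = t := by
  rw [lop_apply hNE]; simp

theorem la_Sr (hNE : {j | FreeTp1 n α F t r j}.Nonempty) {c : ℕ} (hc : c ∈ LS n α t r F) :
    Lop n α r t F r c = t := by
  have h1 := (lS_cond hc).1
  have h2 := hc.1
  rw [lop_apply hNE, if_neg (fun h => absurd h.2 (by omega)),
    if_neg (fun h => absurd h.2 (by omega) : ¬(c ∈ LS n α t r F ∧ F r c = t)),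
    if_pos ⟨hc, h1⟩]

theorem la_St (hNE : {j | FreeTp1 n α F t r j}.Nonempty) {i c : ℕ} (hc : c ∈ LS n α t r F)
    (hv : F i c = t) : Lop n α r t F i c = t + 1 := by
  have h2 := hc.1
  rw [lop_apply hNE, if_neg (by omega : ¬(i = r ∧ c = LJ n α t r F)), if_pos ⟨hc, hv⟩]

theorem la_unc (hNE : {j | FreeTp1 n α F t r j}.Nonempty) {c : ℕ} (hc : c ∉ LS n α t r F)
    (hcj : c ≠ LJ n α t r F) (i : ℕ) : Lop n α r t F i c = F i c := by
  rw [lop_apply hNE, if_neg (fun h => hcj h.2), if_neg (fun h => hc h.1),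
    if_neg (fun h => hc h.1)]

theorem la_uncr (hNE : {j | FreeTp1 n α F t r j}.Nonempty) {i c : ℕ}
    (hc : c ∉ LS n α t r F) (hir : i ≠ r) : Lop n α r t F i c = F i c := by
  rw [lop_apply hNE, if_neg (fun h => hir h.1), if_neg (fun h => hc h.1),
    if_neg (fun h => hc h.1)]

theorem la_Sother (hNE : {j | FreeTp1 n α F t r j}.Nonempty) {i c : ℕ}
    (hc : c ∈ LS n α t r F) (h1 : F i c ≠ t) (h2 : F i c ≠ t + 1) :
    Lop n α r t F i c = F i c := by
  have h3 := hc.1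
  have h4 := (lS_cond hc).1
  rw [lop_apply hNE, if_neg, if_neg (fun h => h1 h.2), if_neg (fun h => h2 h.2)]
  rintro ⟨hi, hcj⟩; omega

theorem la_right (hNE : {j | FreeTp1 n α F t r j}.Nonempty) {c : ℕ}
    (h : LJ n α t r F < c) (i : ℕ) : Lop n α r t F i c = F i c :=
  la_unc hNE (fun hc => absurd hc.1 (by omega)) (by omega) i

theorem lS_t1row (hF : IsSSF n α F) {i c : ℕ} (hc : c ∈ LS n α t r F)
    (hb : Box n α i c) (hv : F i c = t + 1) : i = r := by
  have h1 := (lS_cond hc).1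
  exact val_unique hF hb (box_of_val hF h1 (by omega)) (by rw [hv, h1])

theorem lS_trow (hF : IsSSF n α F) {i c : ℕ} (hc : c ∈ LS n α t r F)
    (hb : Box n α i c) (hv : F i c = t) : r < i := by
  obtain ⟨-, i', hi', hbi', hvi'⟩ := lS_cond hc
  have : i = i' := val_unique hF hb hbi' (by rw [hv, hvi'])
  omega

theorem cc_congr {G : ℕ → ℕ → ℕ} {k v : ℕ} (h : ∀ i, G i k = F i k) :
    ColContains n α G k v ↔ ColContains n α F k v := by
  unfold ColContains
  constructor <;> rintro ⟨i, hb, hv⟩ <;> refine ⟨i, hb, ?_⟩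
  · rw [← hv, h i]
  · rw [h i, hv]

theorem pseudo_congr {G : ℕ → ℕ → ℕ} {i j i' j' : ℕ}
    (h : ∀ i'' k, j ≤ k → k ≤ j' → G i'' k = F i'' k) :
    PseudoFreePair n α G t i j i' j' ↔ PseudoFreePair n α F t i j i' j' := by
  unfold PseudoFreePair
  constructor <;> rintro ⟨b1, v1, c1, b2, v2, c2, l1, l2, mid⟩ <;>
    refine ⟨b1, ?_, ?_, b2, ?_, ?_, l1, l2, fun k hk1 hk2 => ?_⟩
  · rw [← v1, h i j le_rfl (by omega)]
  · rwa [cc_congr (fun i'' => h i'' j le_rfl (by omega))] at c1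
  · rw [← v2, h i' j' (by omega) le_rfl]
  · rwa [cc_congr (fun i'' => h i'' j' (by omega) le_rfl)] at c2
  · have := mid k hk1 hk2
    rwa [cc_congr (fun i'' => h i'' k (by omega) (by omega)),
      cc_congr (fun i'' => h i'' k (by omega) (by omega))] at this
  · rw [h i j le_rfl (by omega)]; exact v1
  · rwa [cc_congr (fun i'' => h i'' j le_rfl (by omega))]
  · rw [h i' j' (by omega) le_rfl]; exact v2
  · rwa [cc_congr (fun i'' => h i'' j' (by omega) le_rfl)]
  · have := mid k hk1 hk2
    rwa [← cc_congr (fun i'' => h i'' k (by omega) (by omega)),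
      ← cc_congr (fun i'' => h i'' k (by omega) (by omega))] at this

theorem freeT_congr_right {G : ℕ → ℕ → ℕ} {c : ℕ}
    (h : ∀ i k, c ≤ k → G i k = F i k) :
    FreeT n α G t r c ↔ FreeT n α F t r c := by
  unfold FreeT
  constructor <;> rintro ⟨b1, v1, c1, ps⟩ <;>
    refine ⟨b1, ?_, ?_, fun ⟨i', j', hp⟩ => ps ⟨i', j', ?_⟩⟩
  · rw [← v1, h r c le_rfl]
  · rwa [cc_congr (fun i => h i c le_rfl)] at c1
  · rwa [pseudo_congr (fun i'' k hk _ => h i'' k hk)]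
  · rw [h r c le_rfl]; exact v1
  · rwa [cc_congr (fun i => h i c le_rfl)]
  · rwa [← pseudo_congr (fun i'' k hk _ => h i'' k hk)]

theorem freeTp1_congr_left {G : ℕ → ℕ → ℕ} {c : ℕ}
    (h : ∀ i k, k ≤ c → G i k = F i k) :
    FreeTp1 n α G t r c ↔ FreeTp1 n α F t r c := by
  unfold FreeTp1
  constructor <;> rintro ⟨b1, v1, c1, ps⟩ <;>
    refine ⟨b1, ?_, ?_, fun ⟨i₀, j₀, hp⟩ => ps ⟨i₀, j₀, ?_⟩⟩
  · rw [← v1, h r c le_rfl]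
  · rwa [cc_congr (fun i => h i c le_rfl)] at c1
  · rwa [pseudo_congr (fun i'' k _ hk => h i'' k hk)]
  · rw [h r c le_rfl]; exact v1
  · rwa [cc_congr (fun i => h i c le_rfl)]
  · rwa [← pseudo_congr (fun i'' k _ hk => h i'' k hk)]


theorem lS_not_J {c : ℕ} (hc : c ∈ LS n α t r F) : c ≠ LJ n α t r F :=
  fun h => absurd hc.1 (by omega)

theorem lop_left_unchanged (hNE : {j | FreeTp1 n α F t r j}.Nonempty) {c : ℕ}
    (hc : c ∉ LS n α t r F) (hcj : c < LJ n α t r F) :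
    ∀ i k, k ≤ c → Lop n α r t F i k = F i k := by
  intro i k hk
  have hknS : k ∉ LS n α t r F := fun h => hc (lS_closure h hk hcj)
  exact la_unc hNE hknS (by omega) i

theorem lop_freeT_J (hF : IsSSF n α F) (hNE : {j | FreeTp1 n α F t r j}.Nonempty) :
    FreeT n α (Lop n α r t F) t r (LJ n α t r F) := by
  obtain ⟨hjb, hjv, hjcc, hjps⟩ := lj_mem hNE
  have hJS : LJ n α t r F ∉ LS n α t r F := fun h => lS_not_J h rfl
  refine ⟨hjb, la_rj hNE, ?_, ?_⟩
  · rintro ⟨i, hb, hv⟩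
    by_cases hir : i = r
    · rw [hir, la_rj hNE] at hv; omega
    · rw [la_uncr hNE hJS hir] at hv
      exact hir (val_unique hF hb hjb (by rw [hv, hjv]))
  · rintro ⟨i', c', hb1, hv1, hcc1, hb2, hv2, hcc2, hlt1, hlt2, hmid⟩
    have hFi' : F i' c' = t + 1 := by rw [← la_right hNE hlt2 i']; exact hv2
    have hbase : ∀ q, Box n α q (LJ n α t r F) → F q (LJ n α t r F) = t + 1 → r ≤ q :=
      fun q hq hqv => (val_unique hF hq hjb (by rw [hqv, hjv])).ge
    have hmid' : ∀ k, LJ n α t r F ≤ k → k ≤ c' → ∃ p, Box n α p k ∧ F p k = t + 1 := by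
      intro k hk1 hk2
      rcases eq_or_lt_of_le hk1 with he | hlt
      · exact ⟨r, he ▸ hjb, he ▸ hjv⟩
      · rcases eq_or_lt_of_le hk2 with he | hlt'
        · exact ⟨i', he ▸ hb2, he ▸ hFi'⟩
        · have := (hmid k hlt hlt').2
          rw [cc_congr (la_right hNE hlt)] at this
          exact this
    have := chainGE hF hbase hmid' (le_of_lt hlt2) i' hb2 hFi'
    omega

theorem lop_Tp1_set (hF : IsSSF n α F) (hNE : {j | FreeTp1 n α F t r j}.Nonempty) :
    {c | FreeTp1 n α (Lop n α r t F) t r c}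
      = {c | FreeTp1 n α F t r c} \ {LJ n α t r F} := by
  obtain ⟨hjb, hjv, hjcc, hjps⟩ := lj_mem hNE
  ext c
  simp only [Set.mem_setOf_eq, Set.mem_diff, Set.mem_singleton_iff]
  constructor
  · intro h
    have hbv := h.2.1
    have hcj : c ≠ LJ n α t r F := by
      intro he; rw [he, la_rj hNE] at hbv; omega
    have hcS : c ∉ LS n α t r F := by
      intro hS
      rw [la_Sr hNE hS] at hbv; omega
    have hFv : F r c = t + 1 := by rw [← la_unc hNE hcS hcj r]; exact hbv
    have hclt : c < LJ n α t r F := by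
      rcases Nat.lt_or_ge c (LJ n α t r F) with h' | h'
      · exact h'
      · exact absurd hFv (lmarch hF hNE c (by omega) h.1)
    rw [freeTp1_congr_left (lop_left_unchanged hNE hcS hclt)] at h
    exact ⟨h, hcj⟩
  · rintro ⟨h, hcj⟩
    have hclt : c < LJ n α t r F := lt_of_le_of_ne (lj_max h) hcj
    have hcS : c ∉ LS n α t r F := by
      intro hS
      obtain ⟨-, i', hi', hbi', hvi'⟩ := lS_cond hS
      exact h.2.2.1 ⟨i', hbi', hvi'⟩
    rw [freeTp1_congr_left (lop_left_unchanged hNE hcS hclt)]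
    exact h

theorem lop_T_set (hF : IsSSF n α F) (hNE : {j | FreeTp1 n α F t r j}.Nonempty) :
    {c | FreeT n α (Lop n α r t F) t r c}
      = insert (LJ n α t r F) {c | FreeT n α F t r c} := by
  obtain ⟨hjb, hjv, hjcc, hjps⟩ := lj_mem hNE
  have hJ1 : 1 ≤ LJ n α t r F := hjb.2.2.1
  ext c
  simp only [Set.mem_setOf_eq, Set.mem_insert_iff]
  constructor
  · intro h
    by_cases hcj : c = LJ n α t r F
    · exact Or.inl hcj
    · right
      have hbv := h.2.1
      have hcS : c ∉ LS n α t r F := by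
        intro hS
        obtain ⟨-, i', hi', hbi', hvi'⟩ := lS_cond hS
        exact h.2.2.1 ⟨i', hbi', by rw [la_St hNE hS hvi']⟩
      have hFv : F r c = t := by rw [← la_unc hNE hcS hcj r]; exact hbv
      have hclt : LJ n α t r F < c := by
        rcases Nat.lt_or_ge (LJ n α t r F) c with h' | h'
        · exact h'
        · have : F r (LJ n α t r F) ≤ F r c := row_anti hF hjb h.1.2.2.1 (by omega)
          omega
      rwa [freeT_congr_right (fun i k hk => la_right hNE (by omega) i)] at h
  · rintro (h | h)
    · exact h ▸ lop_freeT_J hF hNE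
    · have hcj : c ≠ LJ n α t r F := fun he => by
        have h1 := h.2.1; rw [he] at h1; omega
      have hclt : LJ n α t r F < c := by
        rcases Nat.lt_or_ge (LJ n α t r F) c with h' | h'
        · exact h'
        · have : F r (LJ n α t r F) ≤ F r c := row_anti hF hjb h.1.2.2.1 (by omega)
          have := h.2.1
          omega
      rwa [freeT_congr_right (fun i k hk => la_right hNE (by omega) i)]


theorem la_ne (hF : IsSSF n α F) (hNE : {j | FreeTp1 n α F t r j}.Nonempty) {i c : ℕ}
    (hb : Box n α i c) (hir : i ≠ r) (hnet : F i c ≠ t) :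
    Lop n α r t F i c = F i c := by
  by_cases hS : c ∈ LS n α t r F
  · by_cases ht1 : F i c = t + 1
    · exact absurd (lS_t1row hF hS hb ht1) hir
    · exact la_Sother hNE hS hnet ht1
  · exact la_uncr hNE hS hir

theorem lop_isSSF (hF : IsSSF n α F) (ht : 1 ≤ t) (hrt : t + 1 ≤ r)
    (hNE : {j | FreeTp1 n α F t r j}.Nonempty) : IsSSF n α (Lop n α r t F) := by
  obtain ⟨hjb, hjv, hjcc, hjps⟩ := lj_mem hNE
  have h0 := hF.1; have h1 := hF.2.1; have h2 := hF.2.2.1; have h3 := hF.2.2.2.1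
  have h4 := hF.2.2.2.2.1; have h5 := hF.2.2.2.2.2
  have hJS : LJ n α t r F ∉ LS n α t r F := fun h => lS_not_J h rfl
  have hJ1S : LJ n α t r F + 1 ∉ LS n α t r F := fun h => absurd h.1 (by omega)
  refine ⟨?_, ?_, ?_, ?_, ?_, ?_⟩
  · -- support
    intro i c hb
    rw [lop_apply hNE]
    split_ifs with ha hb' hc'
    · exact absurd (show Box n α i c by rw [ha.1, ha.2]; exact hjb) hb
    · have := h0 i c hb; omega
    · have := h0 i c hb; omega
    · exact h0 i c hb
  · -- positivity
    intro i c hb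
    rw [lop_apply hNE]
    split_ifs with ha hb' hc'
    · omega
    · omega
    · omega
    · exact h1 i c hb
  · -- rows weakly decreasing
    intro i c hc1 hb
    by_cases hir : i = r
    · rw [hir] at hb ⊢
      by_cases hcS : c ∈ LS n α t r F
      · rw [la_Sr hNE hcS]
        rcases lS_succ hcS with h | h
        · rw [la_Sr hNE h]
        · rw [h, la_rj hNE]
      · by_cases hcj : c = LJ n α t r F
        · subst hcj
          rw [la_rj hNE, la_unc hNE hJ1S (by omega) r]
          have hle : F r (LJ n α t r F + 1) ≤ F r (LJ n α t r F) := h2 r _ hc1 hb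
          have hne := lmarch hF hNE (LJ n α t r F + 1) (by omega) hb
          omega
        · rw [la_unc hNE hcS hcj r]
          by_cases hc1S : (c+1) ∈ LS n α t r F
          · rw [la_Sr hNE hc1S]
            have := h2 r c hc1 hb
            have := (lS_cond hc1S).1
            omega
          · by_cases hc1j : c + 1 = LJ n α t r F
            · rw [hc1j, la_rj hNE]
              have := h2 r c hc1 hb
              have : F r (c+1) = t + 1 := hc1j ▸ hjv
              omega
            · rw [la_unc hNE hc1S hc1j r]; exact h2 r c hc1 hb
    · by_cases hc1S : (c+1) ∈ LS n α t r F ∧ F i (c+1) = t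
      · rw [la_St hNE hc1S.1 hc1S.2]
        have hig : r < i := lS_trow hF hc1S.1 hb hc1S.2
        by_cases hcS : c ∈ LS n α t r F ∧ F i c = t
        · rw [la_St hNE hcS.1 hcS.2]
        · have hbc : Box n α i c := box_mono hb (by omega) (by omega)
          have hmon := h2 i c hc1 hb
          have hne : F i c ≠ t := by
            intro he
            by_cases hcS' : c ∈ LS n α t r F
            · exact hcS ⟨hcS', he⟩
            · exact lNoLowT hF hNE hcS' (Or.inl hc1S.1) hig hbc he
          rw [la_ne hF hNE hbc hir hne]; omega
      · have hupper : Lop n α r t F i (c+1) = F i (c+1) := by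
          by_cases hS : (c+1) ∈ LS n α t r F
          · by_cases ht1 : F i (c+1) = t + 1
            · exact absurd (lS_t1row hF hS hb ht1) hir
            · exact la_Sother hNE hS (fun hh => hc1S ⟨hS, hh⟩) ht1
          · exact la_uncr hNE hS hir
        rw [hupper]
        have hmon := h2 i c hc1 hb
        have hbc : Box n α i c := box_mono hb (by omega) (by omega)
        by_cases hcS : c ∈ LS n α t r F ∧ F i c = t
        · rw [la_St hNE hcS.1 hcS.2]; omega
        · have : Lop n α r t F i c = F i c := by
            by_cases hS : c ∈ LS n α t r F
            · by_cases ht1 : F i c = t + 1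
              · exact absurd (lS_t1row hF hS hbc ht1) hir
              · exact la_Sother hNE hS (fun he => hcS ⟨hS, he⟩) ht1
            · exact la_uncr hNE hS hir
          rw [this]; exact hmon
  · -- flag condition
    intro i c hb
    rw [lop_apply hNE]
    split_ifs with ha hb' hc'
    · have := ha.1; omega
    · have := lS_trow hF hb'.1 hb hb'.2; omega
    · have := h3 i c hb; omega
    · exact h3 i c hb
  · -- column distinctness
    intro i i' c hbi hbi' hne heq
    by_cases hcS : c ∈ LS n α t r F
    · obtain ⟨hvr, iw, hiw, hbw, hvw⟩ := lS_cond hcS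
      have hbrc : Box n α r c := box_of_val hF hvr (by omega)
      have key : ∀ p, Box n α p c → (p = r ∧ Lop n α r t F p c = t) ∨
          (p = iw ∧ Lop n α r t F p c = t + 1) ∨
          (p ≠ r ∧ p ≠ iw ∧ Lop n α r t F p c = F p c ∧ F p c ≠ t ∧ F p c ≠ t + 1) := by
        intro p hbp
        by_cases hpr : p = r
        · exact Or.inl ⟨hpr, by rw [hpr, la_Sr hNE hcS]⟩
        · by_cases hpw : p = iw
          · exact Or.inr (Or.inl ⟨hpw, by rw [hpw, la_St hNE hcS hvw]⟩)
          · have hnt : F p c ≠ t := fun he => hpw (val_unique hF hbp hbw (by rw [he, hvw]))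
            have hnt1 : F p c ≠ t + 1 := fun he => hpr (lS_t1row hF hcS hbp he)
            exact Or.inr (Or.inr ⟨hpr, hpw, la_ne hF hNE hbp hpr hnt, hnt, hnt1⟩)
      rcases key i hbi with ⟨e1, v1⟩ | ⟨e1, v1⟩ | ⟨e1, e1', v1, n1, n1'⟩ <;>
        rcases key i' hbi' with ⟨e2, v2⟩ | ⟨e2, v2⟩ | ⟨e2, e2', v2, n2, n2'⟩ <;>
        rw [v1, v2] at heq
      · exact hne (e1.trans e2.symm)
      · omega
      · exact n2 heq.symm
      · omega
      · exact hne (e1.trans e2.symm)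
      · exact n2' heq.symm
      · exact n1 heq
      · exact n1' heq
      · exact h4 i i' c hbi hbi' hne heq
    · by_cases hcj : c = LJ n α t r F
      · subst hcj
        have key : ∀ p, Box n α p (LJ n α t r F) →
            (p = r ∧ Lop n α r t F p (LJ n α t r F) = t) ∨
            (p ≠ r ∧ Lop n α r t F p (LJ n α t r F) = F p (LJ n α t r F) ∧
              F p (LJ n α t r F) ≠ t) := by
          intro p hbp
          by_cases hpr : p = r
          · exact Or.inl ⟨hpr, by rw [hpr, la_rj hNE]⟩
          · exact Or.inr ⟨hpr, la_uncr hNE hJS hpr, fun he => hjcc ⟨p, hbp, he⟩⟩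
        rcases key i hbi with ⟨e1, v1⟩ | ⟨e1, v1, n1⟩ <;>
          rcases key i' hbi' with ⟨e2, v2⟩ | ⟨e2, v2, n2⟩ <;>
          rw [v1, v2] at heq
        · exact hne (e1.trans e2.symm)
        · exact n2 heq.symm
        · exact n1 heq
        · exact h4 i i' _ hbi hbi' hne heq
      · rw [la_unc hNE hcS hcj i, la_unc hNE hcS hcj i'] at heq
        exact h4 i i' c hbi hbi' hne heq
  · -- condition (iv)
    intro i i' c hbi hbi' hord hlt
    by_cases hcS : c ∈ LS n α t r F
    · obtain ⟨hvr, iw, hiw, hbw, hvw⟩ := lS_cond hcS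
      have hbrc : Box n α r c := box_of_val hF hvr (by omega)
      have hvr1 : F r (c+1) = t + 1 := by
        rcases lS_succ hcS with h | h
        · exact (lS_cond h).1
        · exact h ▸ hjv
      have hbr1 : Box n α r (c+1) := box_of_val hF hvr1 (by omega)
      have hLr1 : Lop n α r t F r (c+1) = t := by
        rcases lS_succ hcS with h | h
        · exact la_Sr hNE h
        · rw [h, la_rj hNE]
      have keyS : ∀ p, Box n α p c → p ≠ r → p ≠ iw →
          Lop n α r t F p c = F p c ∧ F p c ≠ t ∧ F p c ≠ t + 1 := by
        intro p hbp hpr hpw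
        have hnt : F p c ≠ t := fun he => hpw (val_unique hF hbp hbw (by rw [he, hvw]))
        have hnt1 : F p c ≠ t + 1 := fun he => hpr (lS_t1row hF hcS hbp he)
        exact ⟨la_ne hF hNE hbp hpr hnt, hnt, hnt1⟩
      by_cases hir : i = r
      · rw [hir] at hlt hord ⊢
        have hir' : i' ≠ r := by omega
        have hiw' : i' ≠ iw := by omega
        obtain ⟨he, hnt, hnt1⟩ := keyS i' hbi' hir' hiw'
        rw [la_Sr hNE hcS, he] at hlt
        have h5' := h5 r i' c hbrc hbi' hord (by omega)
        refine ⟨h5'.1, ?_⟩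
        have hlt2 : t + 1 < F i' (c+1) := by have := h5'.2; omega
        rw [la_Sr hNE hcS, la_ne hF hNE h5'.1 hir' (by omega)]
        omega
      · by_cases hiww : i = iw
        · rw [hiww] at hlt hord ⊢
          rw [la_St hNE hcS hvw] at hlt
          have hir' : i' ≠ r := fun he => by rw [he, la_Sr hNE hcS] at hlt; omega
          have hiw' : i' ≠ iw := by omega
          obtain ⟨he, hnt, hnt1⟩ := keyS i' hbi' hir' hiw'
          rw [he] at hlt
          have h5' := h5 iw i' c hbw hbi' hord (by omega)
          refine ⟨h5'.1, ?_⟩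
          have hgt : t < F i' (c+1) := by have := h5'.2; omega
          have hnt1' : F i' (c+1) ≠ t + 1 := fun he' =>
            hir' (val_unique hF h5'.1 hbr1 (by rw [he', hvr1]))
          rw [la_St hNE hcS hvw, la_ne hF hNE h5'.1 hir' (by omega)]
          omega
        · obtain ⟨he, hnt, hnt1⟩ := keyS i hbi hir hiww
          rw [he] at hlt
          by_cases hir' : i' = r
          · rw [hir'] at hlt hord ⊢
            rw [la_Sr hNE hcS] at hlt
            have h5' := h5 i r c hbi hbrc hord (by omega)
            refine ⟨h5'.1, ?_⟩
            rw [he, hLr1]; omega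
          · by_cases hiw' : i' = iw
            · rw [hiw'] at hlt hord ⊢
              rw [la_St hNE hcS hvw] at hlt
              have h5' := h5 i iw c hbi hbw hord (by omega)
              refine ⟨h5'.1, ?_⟩
              rw [he]
              by_cases hS1 : (c+1) ∈ LS n α t r F ∧ F iw (c+1) = t
              · rw [la_St hNE hS1.1 hS1.2]; omega
              · have hnt1' : F iw (c+1) ≠ t + 1 := fun he' =>
                  absurd (val_unique hF h5'.1 hbr1 (by rw [he', hvr1])) (by omega)
                have heq2 : Lop n α r t F iw (c+1) = F iw (c+1) := by
                  by_cases hS2 : (c+1) ∈ LS n α t r F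
                  · exact la_Sother hNE hS2 (fun hh => hS1 ⟨hS2, hh⟩) hnt1'
                  · exact la_uncr hNE hS2 (by omega)
                rw [heq2]; exact h5'.2
            · obtain ⟨he', hnt', hnt1'⟩ := keyS i' hbi' hir' hiw'
              rw [he'] at hlt
              have h5' := h5 i i' c hbi hbi' hord hlt
              refine ⟨h5'.1, ?_⟩
              rw [he]
              by_cases hS1 : (c+1) ∈ LS n α t r F ∧ F i' (c+1) = t
              · rw [la_St hNE hS1.1 hS1.2]; have := h5'.2; omega
              · have hnt1'' : F i' (c+1) ≠ t + 1 := fun he2 =>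
                  hir' (val_unique hF h5'.1 hbr1 (by rw [he2, hvr1]))
                have heq2 : Lop n α r t F i' (c+1) = F i' (c+1) := by
                  by_cases hS2 : (c+1) ∈ LS n α t r F
                  · exact la_Sother hNE hS2 (fun hh => hS1 ⟨hS2, hh⟩) hnt1''
                  · exact la_uncr hNE hS2 hir'
                rw [heq2]; exact h5'.2
    · by_cases hcj : c = LJ n α t r F
      · subst hcj
        by_cases hir : i = r
        · rw [hir] at hlt hord ⊢
          have hir' : i' ≠ r := by omega
          rw [la_rj hNE, la_uncr hNE hJS hir'] at hlt
          have hnt1 : F i' (LJ n α t r F) ≠ t + 1 := fun he =>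
            hir' (val_unique hF hbi' hjb (by rw [he, hjv]))
          have h5' := h5 r i' (LJ n α t r F) hjb hbi' hord (by omega)
          refine ⟨h5'.1, ?_⟩
          rw [la_rj hNE, la_unc hNE hJ1S (by omega) i']
          have := h5'.2; omega
        · by_cases hir' : i' = r
          · rw [hir'] at hlt hord ⊢
            rw [la_rj hNE, la_uncr hNE hJS hir] at hlt
            have h5' := h5 i r (LJ n α t r F) hbi hjb hord (by omega)
            refine ⟨h5'.1, ?_⟩
            rw [la_uncr hNE hJS hir, la_unc hNE hJ1S (by omega) r]
            exact h5'.2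
          · rw [la_uncr hNE hJS hir, la_uncr hNE hJS hir'] at hlt
            have h5' := h5 i i' (LJ n α t r F) hbi hbi' hord hlt
            refine ⟨h5'.1, ?_⟩
            rw [la_uncr hNE hJS hir, la_unc hNE hJ1S (by omega) i']
            exact h5'.2
      · rw [la_unc hNE hcS hcj i, la_unc hNE hcS hcj i'] at hlt
        have h5' := h5 i i' c hbi hbi' hord hlt
        refine ⟨h5'.1, ?_⟩
        rw [la_unc hNE hcS hcj i]
        by_cases hn : (c+1) ∈ LS n α t r F ∨ c + 1 = LJ n α t r F
        · have hvr1 : F r (c+1) = t + 1 := by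
            rcases hn with h | h
            · exact (lS_cond h).1
            · exact h ▸ hjv
          by_cases hir' : i' = r
          · rw [hir'] at hlt hord h5' ⊢
            have hLr1 : Lop n α r t F r (c+1) = t := by
              rcases hn with h | h
              · exact la_Sr hNE h
              · rw [h, la_rj hNE]
            rw [hLr1]
            have hne := lNoLowT hF hNE hcS hn (by omega) hbi
            have := h5'.2; omega
          · by_cases hS1 : (c+1) ∈ LS n α t r F ∧ F i' (c+1) = t
            · rw [la_St hNE hS1.1 hS1.2]; have := h5'.2; omega
            · have hnt1 : F i' (c+1) ≠ t + 1 := fun he =>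
                hir' (val_unique hF h5'.1 (box_of_val hF hvr1 (by omega)) (by rw [he, hvr1]))
              have heq2 : Lop n α r t F i' (c+1) = F i' (c+1) := by
                by_cases hS2 : (c+1) ∈ LS n α t r F
                · exact la_Sother hNE hS2 (fun hh => hS1 ⟨hS2, hh⟩) hnt1
                · exact la_uncr hNE hS2 hir'
              rw [heq2]; exact h5'.2
        · push_neg at hn
          rw [la_unc hNE hn.1 hn.2 i']
          exact h5'.2


/-! ### The R side -/

noncomputable def RJ (n : ℕ) (α : ℕ → ℕ) (t r : ℕ) (F : ℕ → ℕ → ℕ) : ℕ :=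
  sInf {j | FreeT n α F t r j}

def RS (n : ℕ) (α : ℕ → ℕ) (t r : ℕ) (F : ℕ → ℕ → ℕ) : Set ℕ :=
  {k | k < RJ n α t r F ∧ ∀ m, k ≤ m → m < RJ n α t r F →
      F r m = t ∧ ∃ i, r < i ∧ Box n α i m ∧ F i m = t + 1}

theorem rop_apply (hNE : {j | FreeT n α F t r j}.Nonempty) (i c : ℕ) :
    Rop n α r t F i c =
      if i = r ∧ c = RJ n α t r F then t + 1
      else if c ∈ RS n α t r F ∧ F i c = t then t + 1
      else if c ∈ RS n α t r F ∧ F i c = t + 1 then t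
      else F i c := by
  unfold Rop
  rw [if_pos hNE]
  exact if_congr Iff.rfl rfl (if_congr Iff.rfl rfl (if_congr Iff.rfl rfl rfl))

theorem rj_mem (hNE : {j | FreeT n α F t r j}.Nonempty) :
    FreeT n α F t r (RJ n α t r F) :=
  Nat.sInf_mem hNE

theorem rj_min {c : ℕ} (hc : FreeT n α F t r c) : RJ n α t r F ≤ c :=
  Nat.sInf_le hc

theorem rS_cond {c : ℕ} (hc : c ∈ RS n α t r F) :
    F r c = t ∧ ∃ i, r < i ∧ Box n α i c ∧ F i c = t + 1 :=
  hc.2 c le_rfl hc.1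

theorem rS_closure {c c' : ℕ} (hc : c ∈ RS n α t r F) (h1 : c ≤ c')
    (h2 : c' < RJ n α t r F) : c' ∈ RS n α t r F :=
  ⟨h2, fun m hm hm' => hc.2 m (h1.trans hm) hm'⟩

theorem rS_succ {c : ℕ} (hc : c ∈ RS n α t r F) :
    c + 1 ∈ RS n α t r F ∨ c + 1 = RJ n α t r F := by
  rcases Nat.lt_or_ge (c+1) (RJ n α t r F) with h | h
  · exact Or.inl (rS_closure hc (by omega) h)
  · right; have := hc.1; omega

theorem rS_fail {c : ℕ} (hc : c ∉ RS n α t r F)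
    (h : c + 1 ∈ RS n α t r F ∨ c + 1 = RJ n α t r F) :
    ¬ (F r c = t ∧ ∃ i, r < i ∧ Box n α i c ∧ F i c = t + 1) := by
  intro hcond
  apply hc
  have hlt : c < RJ n α t r F := by
    rcases h with h | h
    · have := h.1; omega
    · omega
  refine ⟨hlt, fun m hm hm' => ?_⟩
  rcases Nat.eq_or_lt_of_le hm with he | hlt'
  · exact he ▸ hcond
  · rcases h with h | h
    · exact h.2 m (by omega) hm'
    · omega

theorem rS_not_J {c : ℕ} (hc : c ∈ RS n α t r F) : c ≠ RJ n α t r F :=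
  fun h => absurd hc.1 (by omega)

theorem ra_rj (hNE : {j | FreeT n α F t r j}.Nonempty) :
    Rop n α r t F r (RJ n α t r F) = t + 1 := by
  rw [rop_apply hNE]; simp

theorem ra_Sr (hNE : {j | FreeT n α F t r j}.Nonempty) {c : ℕ} (hc : c ∈ RS n α t r F) :
    Rop n α r t F r c = t + 1 := by
  have h1 := (rS_cond hc).1
  have h2 := hc.1
  rw [rop_apply hNE, if_neg (fun h => absurd h.2 (by omega)), if_pos ⟨hc, h1⟩]

theorem ra_St1 (hNE : {j | FreeT n α F t r j}.Nonempty) {i c : ℕ} (hc : c ∈ RS n α t r F)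
    (hv : F i c = t + 1) : Rop n α r t F i c = t := by
  have h2 := hc.1
  rw [rop_apply hNE, if_neg (fun h => absurd h.2 (by omega)),
    if_neg (fun h => absurd h.2 (by omega) : ¬(c ∈ RS n α t r F ∧ F i c = t)),
    if_pos ⟨hc, hv⟩]

theorem ra_unc (hNE : {j | FreeT n α F t r j}.Nonempty) {c : ℕ} (hc : c ∉ RS n α t r F)
    (hcj : c ≠ RJ n α t r F) (i : ℕ) : Rop n α r t F i c = F i c := by
  rw [rop_apply hNE, if_neg (fun h => hcj h.2), if_neg (fun h => hc h.1),
    if_neg (fun h => hc h.1)]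

theorem ra_uncr (hNE : {j | FreeT n α F t r j}.Nonempty) {i c : ℕ}
    (hc : c ∉ RS n α t r F) (hir : i ≠ r) : Rop n α r t F i c = F i c := by
  rw [rop_apply hNE, if_neg (fun h => hir h.1), if_neg (fun h => hc h.1),
    if_neg (fun h => hc h.1)]

theorem ra_Sother (hNE : {j | FreeT n α F t r j}.Nonempty) {i c : ℕ}
    (hc : c ∈ RS n α t r F) (h1 : F i c ≠ t) (h2 : F i c ≠ t + 1) :
    Rop n α r t F i c = F i c := by
  have h3 := hc.1
  have h4 := (rS_cond hc).1
  rw [rop_apply hNE, if_neg, if_neg (fun h => h1 h.2), if_neg (fun h => h2 h.2)]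
  rintro ⟨hi, hcj⟩; omega

theorem ra_right (hNE : {j | FreeT n α F t r j}.Nonempty) {c : ℕ}
    (h : RJ n α t r F < c) (i : ℕ) : Rop n α r t F i c = F i c :=
  ra_unc hNE (fun hc => absurd hc.1 (by omega)) (by omega) i

theorem rS_trow (hF : IsSSF n α F) (ht : 1 ≤ t) {i c : ℕ} (hc : c ∈ RS n α t r F)
    (hb : Box n α i c) (hv : F i c = t) : i = r := by
  have h1 := (rS_cond hc).1
  exact val_unique hF hb (box_of_val hF h1 (by omega)) (by rw [hv, h1])

theorem rS_t1row (hF : IsSSF n α F) {i c : ℕ} (hc : c ∈ RS n α t r F)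
    (hb : Box n α i c) (hv : F i c = t + 1) : r < i := by
  obtain ⟨-, i', hi', hbi', hvi'⟩ := rS_cond hc
  have : i = i' := val_unique hF hb hbi' (by rw [hv, hvi'])
  omega

theorem ra_ne (hF : IsSSF n α F) (ht : 1 ≤ t) (hNE : {j | FreeT n α F t r j}.Nonempty) {i c : ℕ}
    (hb : Box n α i c) (hir : i ≠ r) (hnet : F i c ≠ t + 1) :
    Rop n α r t F i c = F i c := by
  by_cases hS : c ∈ RS n α t r F
  · by_cases ht1 : F i c = t
    · exact absurd (rS_trow hF ht hS hb ht1) hir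
    · exact ra_Sother hNE hS ht1 hnet
  · exact ra_uncr hNE hS hir

theorem rNoLowT (hF : IsSSF n α F) (hNE : {j | FreeT n α F t r j}.Nonempty) {c i : ℕ}
    (hnext : c + 1 ∈ RS n α t r F ∨ c + 1 = RJ n α t r F)
    (hi : r < i) (hbi : Box n α i c) : F i c ≠ t := by
  intro hv
  obtain ⟨hjb, hjv, hjcc, hjps⟩ := rj_mem hNE
  have hcJ : c + 1 ≤ RJ n α t r F := by
    rcases hnext with h | h
    · have := h.1; omega
    · omega
  have hbc1 : Box n α r (c+1) := box_mono hjb (by omega) hcJ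
  have hvc1 : F r (c+1) = t := by
    rcases hnext with h | h
    · exact (rS_cond h).1
    · exact h ▸ hjv
  have hbr : Box n α r c := box_mono hbc1 hbi.2.2.1 (by omega)
  have hner : F r c ≠ t := fun he =>
    absurd (val_unique hF hbi hbr (by rw [hv, he])) (by omega)
  have hmono : F r (c+1) ≤ F r c := hF.2.2.1 r c hbi.2.2.1 hbc1
  have h5' := hF.2.2.2.2.2 i r c hbi hbr hi (by omega)
  omega

theorem rledge (hF : IsSSF n α F) (hNE : {j | FreeT n α F t r j}.Nonempty) {c : ℕ}
    (hc : c ∉ RS n α t r F)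
    (hnext : c + 1 ∈ RS n α t r F ∨ c + 1 = RJ n α t r F)
    (hbr : Box n α r c) : F r c ≠ t := by
  intro hv
  obtain ⟨hjb, hjv, hjcc, hjps⟩ := rj_mem hNE
  have hcJ : c + 1 ≤ RJ n α t r F := by
    rcases hnext with h | h
    · have := h.1; omega
    · omega
  have hbc1 : Box n α r (c+1) := box_mono hjb (by omega) hcJ
  have hfail := rS_fail hc hnext
  have hbelow : ∀ i, r < i → Box n α i c → F i c ≠ t + 1 :=
    fun i hi hb hvv => hfail ⟨hv, i, hi, hb, hvv⟩
  have hcc : ¬ ColContains n α F c (t+1) := by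
    rintro ⟨q, hbq, hvq⟩
    rcases lt_trichotomy q r with hql | hql | hql
    · have h5' := hF.2.2.2.2.2 r q c hbr hbq hql (by omega)
      have hm2 : F q (c+1) ≤ F q c := hF.2.2.1 q c hbr.2.2.1 h5'.1
      have hq1 : F q (c+1) = t + 1 := by omega
      rcases hnext with h | h
      · obtain ⟨-, iw, hiw, hbw, hvw⟩ := rS_cond h
        have : q = iw := val_unique hF h5'.1 hbw (by rw [hq1, hvw])
        omega
      · exact hjcc ⟨q, h ▸ h5'.1, h ▸ hq1⟩
    · rw [hql, hv] at hvq; omega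
    · exact hbelow q hql hbq hvq
  have hfree : FreeT n α F t r c := by
    refine ⟨hbr, hv, hcc, ?_⟩
    rintro ⟨i', j'', _, _, _, hb2, hv2, hcc2, hlt1, hlt2, hmid⟩
    rcases lt_trichotomy j'' (RJ n α t r F) with h | h | h
    · have hj2 : j'' ∈ RS n α t r F := by
        rcases hnext with hh | hh
        · exact rS_closure hh (by omega) h
        · omega
      exact hcc2 ⟨r, box_mono hjb (by omega) (by omega), (rS_cond hj2).1⟩
    · exact hjcc ⟨i', h ▸ hb2, h ▸ hv2⟩
    · exact hjcc (hmid (RJ n α t r F) (by omega) h).2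
  have := rj_min hfree
  omega

theorem rmarchX (hF : IsSSF n α F) (hNE : {j | FreeT n α F t r j}.Nonempty) :
    ∀ i', i' < r → Box n α i' (RJ n α t r F + 1) → F i' (RJ n α t r F + 1) ≠ t + 1 := by
  obtain ⟨hjb, hjv, hjcc, hjps⟩ := rj_mem hNE
  suffices main : ∀ d m i₁, 1 ≤ m → i₁ < r → Box n α i₁ (RJ n α t r F + m) →
      F i₁ (RJ n α t r F + m) = t + 1 →
      (∀ k, RJ n α t r F < k → k < RJ n α t r F + m →
        ColContains n α F k t ∧ ColContains n α F k (t+1)) →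
      α i₁ + 1 - (RJ n α t r F + m) ≤ d → False by
    intro i' hi' hb hv
    exact main (α i' + 1 - (RJ n α t r F + 1)) 1 i' le_rfl hi' hb hv
      (fun k hk1 hk2 => by omega) le_rfl
  intro d
  induction d with
  | zero =>
    intro m i₁ hm hi1 hb _ _ hd
    have := hb.2.2.2; omega
  | succ d ih =>
    intro m i₁ hm hi1 hb hv hmids hd
    by_cases hq : ∃ q, Box n α q (RJ n α t r F + m) ∧ F q (RJ n α t r F + m) = t
    · obtain ⟨q, hbq, hvq⟩ := hq
      have hbase : ∀ p, Box n α p (RJ n α t r F) → F p (RJ n α t r F) = t → r ≤ p :=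
        fun p hp hpv => (val_unique hF hp hjb (by rw [hpv, hjv])).ge
      have hmid' : ∀ k, RJ n α t r F ≤ k → k ≤ RJ n α t r F + m →
          ∃ p, Box n α p k ∧ F p k = t := by
        intro k hk1 hk2
        rcases eq_or_lt_of_le hk1 with he | hlt
        · exact ⟨r, he ▸ hjb, he ▸ hjv⟩
        · rcases eq_or_lt_of_le hk2 with he | hlt'
          · exact ⟨q, he ▸ hbq, he ▸ hvq⟩
          · exact (hmids k hlt hlt').1
      have hqr : r ≤ q := chainGE hF hbase hmid' (by omega) q hbq hvq
      have h5' := hF.2.2.2.2.2 q i₁ (RJ n α t r F + m) hbq hb (by omega) (by omega)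
      have hmono : F i₁ (RJ n α t r F + m + 1) ≤ F i₁ (RJ n α t r F + m) :=
        hF.2.2.1 i₁ _ (by have := hjb.2.2.1; omega) h5'.1
      have hveq : F i₁ (RJ n α t r F + m + 1) = t + 1 := by omega
      have hra : RJ n α t r F + (m + 1) = RJ n α t r F + m + 1 := by omega
      have hbnd := hb.2.2.2
      apply ih (m+1) i₁ (by omega) hi1 (hra ▸ h5'.1) (hra ▸ hveq) ?_ (by omega)
      intro k hk1 hk2
      rcases Nat.lt_or_ge k (RJ n α t r F + m) with hk | hk
      · exact hmids k hk1 hk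
      · have : k = RJ n α t r F + m := by omega
        exact this ▸ ⟨⟨q, hbq, hvq⟩, ⟨i₁, hb, hv⟩⟩
    · exact hjps ⟨i₁, RJ n α t r F + m, hjb, hjv, hjcc, hb, hv,
        fun hcc => hq hcc, hi1, by omega, fun k hk1 hk2 => hmids k hk1 hk2⟩


theorem rop_left_unchanged (hNE : {j | FreeT n α F t r j}.Nonempty) {c : ℕ}
    (hc : c ∉ RS n α t r F) (hcj : c < RJ n α t r F) :
    ∀ i k, k ≤ c → Rop n α r t F i k = F i k := by
  intro i k hk
  exact ra_unc hNE (fun h => hc (rS_closure h hk hcj)) (by omega) i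

theorem rop_freeTp1_J (hF : IsSSF n α F) (ht : 1 ≤ t)
    (hNE : {j | FreeT n α F t r j}.Nonempty) :
    FreeTp1 n α (Rop n α r t F) t r (RJ n α t r F) := by
  obtain ⟨hjb, hjv, hjcc, hjps⟩ := rj_mem hNE
  have hJS : RJ n α t r F ∉ RS n α t r F := fun h => rS_not_J h rfl
  refine ⟨hjb, ra_rj hNE, ?_, ?_⟩
  · rintro ⟨i, hb, hv⟩
    by_cases hir : i = r
    · rw [hir, ra_rj hNE] at hv; omega
    · rw [ra_uncr hNE hJS hir] at hv
      exact hir (val_unique hF hb hjb (by rw [hv, hjv]))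
  · rintro ⟨i₀, j₀, hb1, hv1, hcc1, hb2, hv2, hcc2, hlt1, hlt2, hmid⟩
    have hj0S : j₀ ∉ RS n α t r F := fun hS =>
      hcc1 ⟨r, box_of_val hF (rS_cond hS).1 (by omega), by rw [ra_Sr hNE hS]⟩
    have hFv1 : F i₀ j₀ = t := by
      rw [← rop_left_unchanged hNE hj0S hlt2 i₀ j₀ le_rfl]; exact hv1
    have hbase : ∀ q, Box n α q j₀ → F q j₀ = t → i₀ ≤ q :=
      fun q hq hqv => (val_unique hF hq hb1 (by rw [hqv, hFv1])).ge
    have hmid' : ∀ k, j₀ ≤ k → k ≤ RJ n α t r F → ∃ p, Box n α p k ∧ F p k = t := by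
      intro k hk1 hk2
      rcases eq_or_lt_of_le hk1 with he | hlt
      · exact ⟨i₀, he ▸ hb1, he ▸ hFv1⟩
      · rcases eq_or_lt_of_le hk2 with he | hlt'
        · exact ⟨r, he ▸ hjb, he ▸ hjv⟩
        · by_cases hkS : k ∈ RS n α t r F
          · exact ⟨r, box_of_val hF (rS_cond hkS).1 (by omega), (rS_cond hkS).1⟩
          · have := (hmid k hlt hlt').1
            rw [cc_congr (fun i => ra_unc hNE hkS (by omega) i)] at this
            exact this
    have := chainGE hF hbase hmid' (le_of_lt hlt2) r hjb hjv
    omega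

theorem rop_Tp1_set (hF : IsSSF n α F) (ht : 1 ≤ t)
    (hNE : {j | FreeT n α F t r j}.Nonempty) :
    {c | FreeTp1 n α (Rop n α r t F) t r c}
      = insert (RJ n α t r F) {c | FreeTp1 n α F t r c} := by
  obtain ⟨hjb, hjv, hjcc, hjps⟩ := rj_mem hNE
  ext c
  simp only [Set.mem_setOf_eq, Set.mem_insert_iff]
  constructor
  · intro h
    by_cases hcj : c = RJ n α t r F
    · exact Or.inl hcj
    · right
      have hbv := h.2.1
      have hcS : c ∉ RS n α t r F := by
        intro hS
        obtain ⟨-, iw, hiw, hbw, hvw⟩ := rS_cond hS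
        exact h.2.2.1 ⟨iw, hbw, by rw [ra_St1 hNE hS hvw]⟩
      have hFv : F r c = t + 1 := by rw [← ra_unc hNE hcS hcj r]; exact hbv
      have hclt : c < RJ n α t r F := by
        rcases Nat.lt_or_ge c (RJ n α t r F) with h' | h'
        · exact h'
        · have : F r c ≤ F r (RJ n α t r F) := row_anti hF h.1 hjb.2.2.1 (by omega)
          omega
      rwa [freeTp1_congr_left (rop_left_unchanged hNE hcS hclt)] at h
  · rintro (h | h)
    · exact h ▸ rop_freeTp1_J hF ht hNE
    · have hcS : c ∉ RS n α t r F := fun hS => by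
        have h1 := (rS_cond hS).1; have h2 := h.2.1; omega
      have hclt : c < RJ n α t r F := by
        rcases Nat.lt_or_ge c (RJ n α t r F) with h' | h'
        · exact h'
        · have h1 : F r c ≤ F r (RJ n α t r F) := row_anti hF h.1 hjb.2.2.1 (by omega)
          have h2 := h.2.1
          omega
      rwa [freeTp1_congr_left (rop_left_unchanged hNE hcS hclt)]

theorem rop_T_set (hF : IsSSF n α F) (ht : 1 ≤ t)
    (hNE : {j | FreeT n α F t r j}.Nonempty) :
    {c | FreeT n α (Rop n α r t F) t r c}
      = {c | FreeT n α F t r c} \ {RJ n α t r F} := by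
  obtain ⟨hjb, hjv, hjcc, hjps⟩ := rj_mem hNE
  ext c
  simp only [Set.mem_setOf_eq, Set.mem_diff, Set.mem_singleton_iff]
  constructor
  · intro h
    have hbv := h.2.1
    have hcj : c ≠ RJ n α t r F := by
      intro he; rw [he, ra_rj hNE] at hbv; omega
    have hcS : c ∉ RS n α t r F := by
      intro hS; rw [ra_Sr hNE hS] at hbv; omega
    have hFv : F r c = t := by rw [← ra_unc hNE hcS hcj r]; exact hbv
    rcases Nat.lt_or_ge c (RJ n α t r F) with hclt | hcge
    · exfalso
      have huncL := rop_left_unchanged hNE hcS hclt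
      have hfree : FreeT n α F t r c := by
        refine ⟨h.1, hFv, ?_, ?_⟩
        · exact fun hx => h.2.2.1 ((cc_congr (fun i => huncL i c le_rfl)).mpr hx)
        · rintro ⟨i', j'', hb1, hv1, hcc1, hb2, hv2, hcc2, hlt1, hlt2, hmid⟩
          apply h.2.2.2
          have hj2 : j'' < RJ n α t r F := by
            rcases lt_trichotomy j'' (RJ n α t r F) with hh | hh | hh
            · exact hh
            · exact absurd ⟨i', hh ▸ hb2, hh ▸ hv2⟩ hjcc
            · exact absurd (hmid (RJ n α t r F) hclt hh).2 hjcc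
          have hj2S : j'' ∉ RS n α t r F := fun hS =>
            hcc2 ⟨r, box_of_val hF (rS_cond hS).1 (by omega), (rS_cond hS).1⟩
          refine ⟨i', j'', h.1, hbv,
            fun hx => h.2.2.1 hx,
            hb2, by rw [ra_unc hNE hj2S (by omega) i']; exact hv2,
            fun hx => hcc2 ((cc_congr (fun i => ra_unc hNE hj2S (by omega) i)).mp hx),
            hlt1, hlt2, ?_⟩
          intro k hk1 hk2
          by_cases hkS : k ∈ RS n α t r F
          · obtain ⟨hvr, iw, hiw, hbw, hvw⟩ := rS_cond hkS
            exact ⟨⟨iw, hbw, ra_St1 hNE hkS hvw⟩,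
              ⟨r, box_of_val hF hvr (by omega), ra_Sr hNE hkS⟩⟩
          · have hkj : k ≠ RJ n α t r F := by omega
            have := hmid k hk1 hk2
            rw [← cc_congr (fun i => ra_unc hNE hkS hkj i),
              ← cc_congr (fun i => ra_unc hNE hkS hkj i)] at this
            exact this
      exact absurd (rj_min hfree) (by omega)
    · have hclt : RJ n α t r F < c := by omega
      rw [freeT_congr_right (fun i k hk => ra_right hNE (by omega) i)] at h
      exact ⟨h, hcj⟩
  · rintro ⟨h, hcj⟩
    have hclt : RJ n α t r F < c := lt_of_le_of_ne (rj_min h) (Ne.symm hcj)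
    rwa [freeT_congr_right (fun i k hk => ra_right hNE (by omega) i)]


theorem rop_isSSF (hF : IsSSF n α F) (ht : 1 ≤ t) (hrt : t + 1 ≤ r)
    (hNE : {j | FreeT n α F t r j}.Nonempty) : IsSSF n α (Rop n α r t F) := by
  obtain ⟨hjb, hjv, hjcc, hjps⟩ := rj_mem hNE
  have h0 := hF.1; have h1 := hF.2.1; have h2 := hF.2.2.1; have h3 := hF.2.2.2.1
  have h4 := hF.2.2.2.2.1; have h5 := hF.2.2.2.2.2
  have hJS : RJ n α t r F ∉ RS n α t r F := fun h => rS_not_J h rfl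
  have hJ1S : RJ n α t r F + 1 ∉ RS n α t r F := fun h => absurd h.1 (by omega)
  refine ⟨?_, ?_, ?_, ?_, ?_, ?_⟩
  · intro i c hb
    rw [rop_apply hNE]
    split_ifs with ha hb' hc'
    · exact absurd (show Box n α i c by rw [ha.1, ha.2]; exact hjb) hb
    · have := h0 i c hb; omega
    · have := h0 i c hb; omega
    · exact h0 i c hb
  · intro i c hb
    rw [rop_apply hNE]
    split_ifs with ha hb' hc'
    · omega
    · omega
    · omega
    · exact h1 i c hb
  · -- rows weakly decreasing
    intro i c hc1 hb
    by_cases hir : i = r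
    · rw [hir] at hb ⊢
      by_cases hcS : c ∈ RS n α t r F
      · rw [ra_Sr hNE hcS]
        rcases rS_succ hcS with h | h
        · rw [ra_Sr hNE h]
        · rw [h, ra_rj hNE]
      · by_cases hcj : c = RJ n α t r F
        · rw [hcj] at hb ⊢
          rw [ra_rj hNE, ra_unc hNE hJ1S (by omega) r]
          have hle : F r (RJ n α t r F + 1) ≤ F r (RJ n α t r F) :=
            h2 r _ (by have := hjb.2.2.1; omega) hb
          omega
        · rw [ra_unc hNE hcS hcj r]
          have hbrc : Box n α r c := box_mono hb (by omega) (by omega)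
          by_cases hc1S : (c+1) ∈ RS n α t r F
          · rw [ra_Sr hNE hc1S]
            have hm := h2 r c hc1 hb
            have hv1 := (rS_cond hc1S).1
            have := rledge hF hNE hcS (Or.inl hc1S) hbrc
            omega
          · by_cases hc1j : c + 1 = RJ n α t r F
            · rw [hc1j, ra_rj hNE]
              have hm := h2 r c hc1 hb
              have hv1 : F r (c+1) = t := hc1j ▸ hjv
              have := rledge hF hNE hcS (Or.inr hc1j) hbrc
              omega
            · rw [ra_unc hNE hc1S hc1j r]; exact h2 r c hc1 hb
    · have hmon := h2 i c hc1 hb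
      have hbc : Box n α i c := box_mono hb (by omega) (by omega)
      have hlower : Rop n α r t F i c = F i c ∨
          (F i c = t + 1 ∧ Rop n α r t F i c = t) := by
        by_cases hS : c ∈ RS n α t r F
        · by_cases ht1 : F i c = t + 1
          · exact Or.inr ⟨ht1, ra_St1 hNE hS ht1⟩
          · exact Or.inl (ra_Sother hNE hS
              (fun he => hir (rS_trow hF ht hS hbc he)) ht1)
        · exact Or.inl (ra_uncr hNE hS hir)
      have hupper : Rop n α r t F i (c+1) = F i (c+1) ∨
          (F i (c+1) = t + 1 ∧ Rop n α r t F i (c+1) = t) := by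
        by_cases hS : (c+1) ∈ RS n α t r F
        · by_cases ht1 : F i (c+1) = t + 1
          · exact Or.inr ⟨ht1, ra_St1 hNE hS ht1⟩
          · exact Or.inl (ra_Sother hNE hS
              (fun he => hir (rS_trow hF ht hS hb he)) ht1)
        · exact Or.inl (ra_uncr hNE hS hir)
      rcases hupper with hu | ⟨huv, hu⟩ <;> rcases hlower with hl | ⟨hlv, hl⟩
      · rw [hu, hl]; exact hmon
      · -- lower t+1 ↦ t; upper unchanged: F i (c+1) ≠ t+1
        rw [hu, hl]
        have hcS : c ∈ RS n α t r F := by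
          by_contra hcS
          rw [ra_uncr hNE hcS hir] at hl; omega
        have hne1 : F i (c+1) ≠ t + 1 := by
          intro he
          rcases rS_succ hcS with h | h
          · have := ra_St1 hNE h he; omega
          · exact hjcc ⟨i, h ▸ hb, h ▸ he⟩
        omega
      · rw [hu, hl]; omega
      · rw [hu, hl]
  · intro i c hb
    rw [rop_apply hNE]
    split_ifs with ha hb' hc'
    · have := ha.1; omega
    · have := rS_trow hF ht hb'.1 hb hb'.2; omega
    · have := h3 i c hb; omega
    · exact h3 i c hb
  · -- column distinctness
    intro i i' c hbi hbi' hne heq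
    by_cases hcS : c ∈ RS n α t r F
    · obtain ⟨hvr, iw, hiw, hbw, hvw⟩ := rS_cond hcS
      have key : ∀ p, Box n α p c → (p = r ∧ Rop n α r t F p c = t + 1) ∨
          (p = iw ∧ Rop n α r t F p c = t) ∨
          (p ≠ r ∧ p ≠ iw ∧ Rop n α r t F p c = F p c ∧ F p c ≠ t ∧ F p c ≠ t + 1) := by
        intro p hbp
        by_cases hpr : p = r
        · exact Or.inl ⟨hpr, by rw [hpr, ra_Sr hNE hcS]⟩
        · by_cases hpw : p = iw
          · exact Or.inr (Or.inl ⟨hpw, by rw [hpw, ra_St1 hNE hcS hvw]⟩)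
          · have hnt : F p c ≠ t := fun he => hpr (rS_trow hF ht hcS hbp he)
            have hnt1 : F p c ≠ t + 1 := fun he =>
              hpw (val_unique hF hbp hbw (by rw [he, hvw]))
            exact Or.inr (Or.inr ⟨hpr, hpw, ra_Sother hNE hcS hnt hnt1, hnt, hnt1⟩)
      rcases key i hbi with ⟨e1, v1⟩ | ⟨e1, v1⟩ | ⟨e1, e1', v1, n1, n1'⟩ <;>
        rcases key i' hbi' with ⟨e2, v2⟩ | ⟨e2, v2⟩ | ⟨e2, e2', v2, n2, n2'⟩ <;>
        rw [v1, v2] at heq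
      · exact hne (e1.trans e2.symm)
      · omega
      · exact n2' heq.symm
      · omega
      · exact hne (e1.trans e2.symm)
      · exact n2 heq.symm
      · exact n1' heq
      · exact n1 heq
      · exact h4 i i' c hbi hbi' hne heq
    · by_cases hcj : c = RJ n α t r F
      · subst hcj
        have key : ∀ p, Box n α p (RJ n α t r F) →
            (p = r ∧ Rop n α r t F p (RJ n α t r F) = t + 1) ∨
            (p ≠ r ∧ Rop n α r t F p (RJ n α t r F) = F p (RJ n α t r F) ∧
              F p (RJ n α t r F) ≠ t + 1) := by
          intro p hbp
          by_cases hpr : p = r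
          · exact Or.inl ⟨hpr, by rw [hpr, ra_rj hNE]⟩
          · exact Or.inr ⟨hpr, ra_uncr hNE hJS hpr, fun he => hjcc ⟨p, hbp, he⟩⟩
        rcases key i hbi with ⟨e1, v1⟩ | ⟨e1, v1, n1⟩ <;>
          rcases key i' hbi' with ⟨e2, v2⟩ | ⟨e2, v2, n2⟩ <;>
          rw [v1, v2] at heq
        · exact hne (e1.trans e2.symm)
        · exact n2 heq.symm
        · exact n1 heq
        · exact h4 i i' _ hbi hbi' hne heq
      · rw [ra_unc hNE hcS hcj i, ra_unc hNE hcS hcj i'] at heq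
        exact h4 i i' c hbi hbi' hne heq
  · -- condition (iv)
    intro i i' c hbi hbi' hord hlt
    by_cases hcS : c ∈ RS n α t r F
    · obtain ⟨hvr, iw, hiw, hbw, hvw⟩ := rS_cond hcS
      have hbrc : Box n α r c := box_of_val hF hvr (by omega)
      have hvr1 : F r (c+1) = t := by
        rcases rS_succ hcS with h | h
        · exact (rS_cond h).1
        · exact h ▸ hjv
      have hbr1 : Box n α r (c+1) := box_of_val hF hvr1 (by omega)
      have hRr1 : Rop n α r t F r (c+1) = t + 1 := by
        rcases rS_succ hcS with h | h
        · exact ra_Sr hNE h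
        · rw [h, ra_rj hNE]
      have hne1col : ∀ p, Box n α p (c+1) → p < r → F p (c+1) ≠ t + 1 := by
        intro p hbp hpr he
        rcases rS_succ hcS with h | h
        · have := rS_t1row hF h hbp he; omega
        · exact hjcc ⟨p, h ▸ hbp, h ▸ he⟩
      by_cases hir : i = r
      · rw [hir] at hlt hord ⊢
        have hir' : i' ≠ r := by omega
        have hiw' : i' ≠ iw := by omega
        have hnt : F i' c ≠ t := fun he => hir' (rS_trow hF ht hcS hbi' he)
        have hnt1 : F i' c ≠ t + 1 := fun he =>
          hiw' (val_unique hF hbi' hbw (by rw [he, hvw]))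
        rw [ra_Sr hNE hcS, ra_Sother hNE hcS hnt hnt1] at hlt
        have h5' := h5 r i' c hbrc hbi' hord (by omega)
        refine ⟨h5'.1, ?_⟩
        have hgt : t < F i' (c+1) := by have := h5'.2; omega
        have hnt1' : F i' (c+1) ≠ t + 1 := hne1col i' h5'.1 (by omega)
        rw [ra_Sr hNE hcS, ra_ne hF ht hNE h5'.1 hir' hnt1']
        omega
      · by_cases hir' : i' = r
        · rw [hir'] at hlt hord ⊢
          refine ⟨hbr1, ?_⟩
          rw [hRr1]
          by_cases hiww : i = iw
          · rw [hiww, ra_St1 hNE hcS hvw]; omega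
          · have hnt : F i c ≠ t := fun he => hir (rS_trow hF ht hcS hbi he)
            have hnt1 : F i c ≠ t + 1 := fun he =>
              hiww (val_unique hF hbi hbw (by rw [he, hvw]))
            rw [ra_Sother hNE hcS hnt hnt1]
            rw [ra_Sr hNE hcS, ra_Sother hNE hcS hnt hnt1] at hlt
            omega
        · by_cases hiww : i = iw
          · rw [hiww] at hlt hord ⊢
            have hiw' : i' ≠ iw := by omega
            have hnt : F i' c ≠ t := fun he => hir' (rS_trow hF ht hcS hbi' he)
            have hnt1 : F i' c ≠ t + 1 := fun he =>
              hiw' (val_unique hF hbi' hbw (by rw [he, hvw]))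
            rw [ra_St1 hNE hcS hvw, ra_Sother hNE hcS hnt hnt1] at hlt
            have h5' := h5 iw i' c hbw hbi' hord (by omega)
            refine ⟨h5'.1, ?_⟩
            have hgt : t + 1 < F i' (c+1) := by have := h5'.2; omega
            rw [ra_St1 hNE hcS hvw, ra_ne hF ht hNE h5'.1 hir' (by omega)]
            omega
          · by_cases hiw' : i' = iw
            · rw [hiw'] at hlt hord ⊢
              have hnt : F i c ≠ t := fun he => hir (rS_trow hF ht hcS hbi he)
              have hnt1 : F i c ≠ t + 1 := fun he =>
                hiww (val_unique hF hbi hbw (by rw [he, hvw]))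
              rw [ra_Sother hNE hcS hnt hnt1, ra_St1 hNE hcS hvw] at hlt
              have h5' := h5 i iw c hbi hbw hord (by omega)
              refine ⟨h5'.1, ?_⟩
              rw [ra_Sother hNE hcS hnt hnt1]
              by_cases hS1 : F iw (c+1) = t + 1
              · rcases rS_succ hcS with h | h
                · rw [ra_St1 hNE h hS1]; omega
                · exact absurd ⟨iw, h ▸ h5'.1, h ▸ hS1⟩ hjcc
              · have hSnt : F iw (c+1) ≠ t := fun he =>
                  absurd (val_unique hF h5'.1 hbr1 (he.trans hvr1.symm)) (by omega)
                have heq2 : Rop n α r t F iw (c+1) = F iw (c+1) := by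
                  rcases rS_succ hcS with h | h
                  · exact ra_Sother hNE h hSnt hS1
                  · exact ra_uncr hNE (fun hk => hJS (h ▸ hk)) (by omega)
                rw [heq2]; exact h5'.2
            · have hnt : F i c ≠ t := fun he => hir (rS_trow hF ht hcS hbi he)
              have hnt1 : F i c ≠ t + 1 := fun he =>
                hiww (val_unique hF hbi hbw (by rw [he, hvw]))
              have hnt' : F i' c ≠ t := fun he => hir' (rS_trow hF ht hcS hbi' he)
              have hnt1' : F i' c ≠ t + 1 := fun he =>
                hiw' (val_unique hF hbi' hbw (by rw [he, hvw]))
              rw [ra_Sother hNE hcS hnt hnt1, ra_Sother hNE hcS hnt' hnt1'] at hlt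
              have h5' := h5 i i' c hbi hbi' hord hlt
              refine ⟨h5'.1, ?_⟩
              rw [ra_Sother hNE hcS hnt hnt1]
              have hSnt : F i' (c+1) ≠ t := fun he =>
                hir' (val_unique hF h5'.1 hbr1 (he.trans hvr1.symm))
              by_cases hS1 : F i' (c+1) = t + 1
              · rcases rS_succ hcS with h | h
                · rw [ra_St1 hNE h hS1]
                  have := h5'.2; omega
                · exact absurd ⟨i', h ▸ h5'.1, h ▸ hS1⟩ hjcc
              · have heq2 : Rop n α r t F i' (c+1) = F i' (c+1) := by
                  rcases rS_succ hcS with h | h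
                  · exact ra_Sother hNE h hSnt hS1
                  · exact ra_uncr hNE (fun hk => hJS (h ▸ hk)) hir'
                rw [heq2]; exact h5'.2
    · by_cases hcj : c = RJ n α t r F
      · subst hcj
        by_cases hir : i = r
        · rw [hir] at hlt hord ⊢
          have hir' : i' ≠ r := by omega
          rw [ra_rj hNE, ra_uncr hNE hJS hir'] at hlt
          have h5' := h5 r i' _ hjb hbi' hord (by omega)
          refine ⟨h5'.1, ?_⟩
          have hnt1 : F i' (RJ n α t r F + 1) ≠ t + 1 := rmarchX hF hNE i' (by omega) h5'.1
          have hgt : t < F i' (RJ n α t r F + 1) := by have := h5'.2; omega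
          rw [ra_rj hNE, ra_unc hNE hJ1S (by omega) i']
          omega
        · by_cases hir' : i' = r
          · rw [hir'] at hlt hord ⊢
            rw [ra_rj hNE, ra_uncr hNE hJS hir] at hlt
            have hnt : F i (RJ n α t r F) ≠ t := fun he =>
              hir (val_unique hF hbi hjb (by rw [he, hjv]))
            have h5' := h5 i r _ hbi hjb hord (by omega)
            refine ⟨h5'.1, ?_⟩
            rw [ra_uncr hNE hJS hir, ra_unc hNE hJ1S (by omega) r]
            exact h5'.2
          · rw [ra_uncr hNE hJS hir, ra_uncr hNE hJS hir'] at hlt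
            have h5' := h5 i i' _ hbi hbi' hord hlt
            refine ⟨h5'.1, ?_⟩
            rw [ra_uncr hNE hJS hir, ra_unc hNE hJ1S (by omega) i']
            exact h5'.2
      · rw [ra_unc hNE hcS hcj i, ra_unc hNE hcS hcj i'] at hlt
        have h5' := h5 i i' c hbi hbi' hord hlt
        refine ⟨h5'.1, ?_⟩
        rw [ra_unc hNE hcS hcj i]
        by_cases hn : (c+1) ∈ RS n α t r F ∨ c + 1 = RJ n α t r F
        · have hvr1 : F r (c+1) = t := by
            rcases hn with h | h
            · exact (rS_cond h).1
            · exact h ▸ hjv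
          by_cases hir' : i' = r
          · rw [hir'] at hlt hord h5' ⊢
            have hRr1 : Rop n α r t F r (c+1) = t + 1 := by
              rcases hn with h | h
              · exact ra_Sr hNE h
              · rw [h, ra_rj hNE]
            rw [hRr1]
            have := h5'.2; omega
          · have hSnt : F i' (c+1) ≠ t := fun he =>
              hir' (val_unique hF h5'.1 (box_of_val hF hvr1 (by omega)) (he.trans hvr1.symm))
            by_cases hS1 : F i' (c+1) = t + 1
            · rcases hn with h | h
              · rw [ra_St1 hNE h hS1]
                have hig : r < i' := rS_t1row hF h h5'.1 hS1
                have hne := rNoLowT hF hNE (Or.inl h) (by omega) hbi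
                have := h5'.2; omega
              · exact absurd ⟨i', h ▸ h5'.1, h ▸ hS1⟩ hjcc
            · have heq2 : Rop n α r t F i' (c+1) = F i' (c+1) := by
                rcases hn with h | h
                · exact ra_Sother hNE h hSnt hS1
                · exact ra_uncr hNE (fun hk => hJS (h ▸ hk)) hir'
              rw [heq2]; exact h5'.2
        · push_neg at hn
          rw [ra_unc hNE hn.1 hn.2 i']
          exact h5'.2


theorem lop_iter (ht : 1 ≤ t) (hrt : t + 1 ≤ r) :
    ∀ m (F : ℕ → ℕ → ℕ), IsSSF n α F → m ≤ {c | FreeTp1 n α F t r c}.ncard →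
      IsSSF n α ((Lop n α r t)^[m] F) ∧
      {c | FreeTp1 n α ((Lop n α r t)^[m] F) t r c}.ncard + m
        = {c | FreeTp1 n α F t r c}.ncard ∧
      {c | FreeT n α ((Lop n α r t)^[m] F) t r c}.ncard
        = {c | FreeT n α F t r c}.ncard + m := by
  intro m
  induction m with
  | zero => intro F hF _; rw [Function.iterate_zero_apply]; exact ⟨hF, by omega, by omega⟩
  | succ m ih =>
    intro F hF hm
    have hNE : {c | FreeTp1 n α F t r c}.Nonempty := by
      rcases Set.eq_empty_or_nonempty {c | FreeTp1 n α F t r c} with he | he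
      · rw [he] at hm; simp at hm
      · exact he
    have hstep1 := lop_isSSF hF ht hrt hNE
    have hset1 := lop_Tp1_set hF hNE
    have hset2 := lop_T_set hF hNE
    have hjmem : LJ n α t r F ∈ {c | FreeTp1 n α F t r c} := lj_mem hNE
    have hjnot : LJ n α t r F ∉ {c | FreeT n α F t r c} := by
      intro h
      have h1 := h.2.1
      have h2 := (lj_mem hNE).2.1
      omega
    have hn1 : {c | FreeTp1 n α (Lop n α r t F) t r c}.ncard
        = {c | FreeTp1 n α F t r c}.ncard - 1 := by
      rw [hset1, Set.ncard_diff_singleton_of_mem hjmem]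
    have hn2 : {c | FreeT n α (Lop n α r t F) t r c}.ncard
        = {c | FreeT n α F t r c}.ncard + 1 := by
      rw [hset2, Set.ncard_insert_of_notMem hjnot freeT_finite]
    obtain ⟨ih1, ih2, ih3⟩ := ih (Lop n α r t F) hstep1 (by omega)
    rw [Function.iterate_succ_apply]
    exact ⟨ih1, by omega, by omega⟩

theorem rop_iter (ht : 1 ≤ t) (hrt : t + 1 ≤ r) :
    ∀ m (F : ℕ → ℕ → ℕ), IsSSF n α F → m ≤ {c | FreeT n α F t r c}.ncard →
      IsSSF n α ((Rop n α r t)^[m] F) ∧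
      {c | FreeT n α ((Rop n α r t)^[m] F) t r c}.ncard + m
        = {c | FreeT n α F t r c}.ncard ∧
      {c | FreeTp1 n α ((Rop n α r t)^[m] F) t r c}.ncard
        = {c | FreeTp1 n α F t r c}.ncard + m := by
  intro m
  induction m with
  | zero => intro F hF _; rw [Function.iterate_zero_apply]; exact ⟨hF, by omega, by omega⟩
  | succ m ih =>
    intro F hF hm
    have hNE : {c | FreeT n α F t r c}.Nonempty := by
      rcases Set.eq_empty_or_nonempty {c | FreeT n α F t r c} with he | he
      · rw [he] at hm; simp at hm
      · exact he
    have hstep1 := rop_isSSF hF ht hrt hNE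
    have hset1 := rop_T_set hF ht hNE
    have hset2 := rop_Tp1_set hF ht hNE
    have hjmem : RJ n α t r F ∈ {c | FreeT n α F t r c} := rj_mem hNE
    have hjnot : RJ n α t r F ∉ {c | FreeTp1 n α F t r c} := by
      intro h
      have h1 := h.2.1
      have h2 := (rj_mem hNE).2.1
      omega
    have hn1 : {c | FreeT n α (Rop n α r t F) t r c}.ncard
        = {c | FreeT n α F t r c}.ncard - 1 := by
      rw [hset1, Set.ncard_diff_singleton_of_mem hjmem]
    have hn2 : {c | FreeTp1 n α (Rop n α r t F) t r c}.ncard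
        = {c | FreeTp1 n α F t r c}.ncard + 1 := by
      rw [hset2, Set.ncard_insert_of_notMem hjnot freeTp1_finite]
    obtain ⟨ih1, ih2, ih3⟩ := ih (Rop n α r t F) hstep1 (by omega)
    rw [Function.iterate_succ_apply]
    exact ⟨ih1, by omega, by omega⟩


/-- `Φ_{r,t}` exchanges the numbers of free entries `t` and `t+1` in row `r`. -/
theorem stmt9 (n : ℕ) (α : ℕ → ℕ) (t r : ℕ) (ht : 1 ≤ t) (hrt : t + 1 ≤ r)
    (F : ℕ → ℕ → ℕ) (hF : IsSSF n α F) :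
    {j | FreeT n α (Phi n α r t F) t r j}.ncard
        = {j | FreeTp1 n α F t r j}.ncard ∧
    {j | FreeTp1 n α (Phi n α r t F) t r j}.ncard
        = {j | FreeT n α F t r j}.ncard := by
  have hkey : 1 ≤ t := ht
  simp only [Phi]
  by_cases h12 : {j | FreeT n α F t r j}.ncard < {j | FreeTp1 n α F t r j}.ncard
  · rw [if_pos h12]
    obtain ⟨-, e2, e3⟩ := lop_iter ht hrt
      ({j | FreeTp1 n α F t r j}.ncard - {j | FreeT n α F t r j}.ncard) F hF (by omega)
    exact ⟨by omega, by omega⟩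
  · rw [if_neg h12]
    by_cases h21 : {j | FreeTp1 n α F t r j}.ncard < {j | FreeT n α F t r j}.ncard
    · rw [if_pos h21]
      obtain ⟨-, e2, e3⟩ := rop_iter ht hrt
        ({j | FreeT n α F t r j}.ncard - {j | FreeTp1 n α F t r j}.ncard) F hF (by omega)
      exact ⟨by omega, by omega⟩
    · rw [if_neg h21]
      exact ⟨by omega, by omega⟩


end Skyline
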